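/- Let A : ℝ^d → ℝ be twice continuously differentiable, fix φ* and φ with δ := φ − φ*, φ_s := φ* + sδ, and suppose 0 < α and α‖v‖² ≤ vᵀ∇²A(φ_s)v ≤ β‖v‖² for all s ∈ [0,1] and v ∈ ℝ^d. Set L(φ) := D_A(φ*‖φ). Then (2α/β)·L(φ) ≤ ⟨∇L(φ), φ − φ*⟩ ≤ (2β/α)·L(φ). -/

import Mathlib

open scoped RealInnerProductSpace

/-- Bregman divergence of `A`. -/
noncomputable def bregman {d : ℕ} (A : EuclideanSpace ℝ (Fin d) → ℝ)
    (u v : EuclideanSpace ℝ (Fin d)) : ℝ :=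
  A u - A v - ⟪gradient A v, u - v⟫

open InnerProductSpace in
lemma one_point_PL_bounds_grad_diff {d : ℕ} (A : EuclideanSpace ℝ (Fin d) → ℝ)
    (hA : ContDiff ℝ 2 A) : Differentiable ℝ (gradient A) := by
  have h1 : ContDiff ℝ 1 (fderiv ℝ A) := hA.fderiv_right (by norm_num)
  have : gradient A = fun x => (toDual ℝ (EuclideanSpace ℝ (Fin d))).symm (fderiv ℝ A x) := rfl
  rw [this]
  exact (toDual ℝ (EuclideanSpace ℝ (Fin d))).symm.toContinuousLinearEquiv.differentiable.comp
    (h1.differentiable one_ne_zero)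

open InnerProductSpace in
lemma one_point_PL_bounds_key_deriv {d : ℕ} (A : EuclideanSpace ℝ (Fin d) → ℝ)
    (hA : ContDiff ℝ 2 A) (φstar ψ : EuclideanSpace ℝ (Fin d)) :
    HasFDerivAt (bregman A φstar)
      (((innerSL ℝ).flip (ψ - φstar)).comp (fderiv ℝ (gradient A) ψ)) ψ := by
  have hAd : Differentiable ℝ A := hA.differentiable (by norm_num)
  have hA1 : HasFDerivAt A (fderiv ℝ A ψ) ψ := (hAd ψ).hasFDerivAt
  have hg : HasFDerivAt (gradient A) (fderiv ℝ (gradient A) ψ) ψ :=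
    ((one_point_PL_bounds_grad_diff A hA) ψ).hasFDerivAt
  have hsub : HasFDerivAt (fun x => φstar - x)
      (-(ContinuousLinearMap.id ℝ (EuclideanSpace ℝ (Fin d)))) ψ := by
    simpa using (hasFDerivAt_id ψ).const_sub φstar
  have hinner := hg.inner ℝ hsub
  have h := ((hasFDerivAt_const (A φstar) ψ).sub hA1).sub hinner
  refine h.congr_fderiv ?_
  ext h
  have hgrad : ∀ u, ⟪gradient A ψ, u⟫ = fderiv ℝ A ψ u := fun u => toDual_symm_apply
  simp only [ContinuousLinearMap.coe_sub', Pi.sub_apply, ContinuousLinearMap.zero_apply,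
    ContinuousLinearMap.coe_comp', Function.comp_apply, fderivInnerCLM_apply,
    ContinuousLinearMap.prod_apply, ContinuousLinearMap.neg_apply, ContinuousLinearMap.coe_id',
    id_eq, ContinuousLinearMap.flip_apply, innerSL_apply_apply, ← hgrad, inner_neg_right,
    inner_sub_right, inner_sub_left]
  ring

/-- If `F' s ≥ c * s` on `[0,1]` then `F 0 + c/2 ≤ F 1`. -/
lemma one_point_PL_bounds_quad_lower {F f' : ℝ → ℝ} {c : ℝ}
    (hF : ∀ s, HasDerivAt F (f' s) s)
    (hb : ∀ s ∈ Set.Icc (0:ℝ) 1, c * s ≤ f' s) :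
    F 0 + c / 2 ≤ F 1 := by
  set G : ℝ → ℝ := fun s => F s - c * s ^ 2 / 2 with hG
  have hG' : ∀ s, HasDerivAt G (f' s - c * s) s := by
    intro s
    have h2 : HasDerivAt (fun s : ℝ => c * s ^ 2 / 2) (c * s) s := by
      have := ((hasDerivAt_pow 2 s).const_mul c).div_const 2
      refine this.congr_deriv (Eq.symm ?_); push_cast; ring
    exact (hF s).sub h2
  have hmono : MonotoneOn G (Set.Icc 0 1) := by
    apply monotoneOn_of_deriv_nonneg (convex_Icc 0 1)
    · exact Continuous.continuousOn
        (continuous_iff_continuousAt.2 fun x => (hG' x).continuousAt)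
    · exact fun x hx => ((hG' x).differentiableAt).differentiableWithinAt
    · intro x hx
      rw [interior_Icc] at hx
      rw [(hG' x).deriv]
      have := hb x ⟨le_of_lt hx.1, le_of_lt hx.2⟩
      linarith
  have h01 := hmono (Set.left_mem_Icc.2 zero_le_one) (Set.right_mem_Icc.2 zero_le_one) zero_le_one
  simp only [hG] at h01
  norm_num at h01
  linarith

lemma one_point_PL_bounds_quad_upper {F f' : ℝ → ℝ} {c : ℝ}
    (hF : ∀ s, HasDerivAt F (f' s) s)
    (hb : ∀ s ∈ Set.Icc (0:ℝ) 1, f' s ≤ c * s) :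
    F 1 ≤ F 0 + c / 2 := by
  have := one_point_PL_bounds_quad_lower (F := fun s => -F s) (f' := fun s => -f' s)
    (c := -c) (fun s => (hF s).neg)
    (fun s hs => by show -c * s ≤ -f' s; have := hb s hs; linarith)
  beta_reduce at this
  linarith

/-- One-point Polyak–Łojasiewicz-type inequality with ray-wise spectral
constants `α, β` bounding the Hessian of `A` along the ray from `φ*` to `φ`. -/
theorem one_point_PL_bounds {d : ℕ}
    (A : EuclideanSpace ℝ (Fin d) → ℝ)
    (hA : ContDiff ℝ 2 A)
    (φstar φ : EuclideanSpace ℝ (Fin d)) (α β : ℝ)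
    (hα : 0 < α)
    (hspec : ∀ s ∈ Set.Icc (0:ℝ) 1, ∀ v : EuclideanSpace ℝ (Fin d),
      α * ‖v‖ ^ 2 ≤ ⟪v, fderiv ℝ (gradient A) (φstar + s • (φ - φstar)) v⟫ ∧
      ⟪v, fderiv ℝ (gradient A) (φstar + s • (φ - φstar)) v⟫ ≤ β * ‖v‖ ^ 2)
    (L : EuclideanSpace ℝ (Fin d) → ℝ)
    (hL : ∀ ψ, L ψ = bregman A φstar ψ) :
    2 * α / β * L φ ≤ ⟪gradient L φ, φ - φstar⟫ ∧
      ⟪gradient L φ, φ - φstar⟫ ≤ 2 * β / α * L φ := by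
  have hLeq : L = bregman A φstar := funext hL
  subst hLeq
  by_cases hδ0 : φ = φstar
  · subst hδ0
    have h0 : bregman A φ φ = 0 := by simp [bregman]
    simp [h0]
  · set δ := φ - φstar with hδ
    have hδpos : 0 < ‖δ‖ ^ 2 :=
      pow_pos (norm_pos_iff.mpr (sub_ne_zero.2 hδ0)) 2
    have hφ1 : φstar + (1:ℝ) • δ = φ := by simp [hδ]
    -- spectral bound on the Hessian at φ
    have hIφ := hspec 1 (Set.right_mem_Icc.2 zero_le_one) δ
    rw [hφ1] at hIφ
    have hβ : 0 < β := by nlinarith [hIφ.1.trans hIφ.2]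
    -- value of the inner product with the gradient
    have hgradL : ⟪gradient (bregman A φstar) φ, δ⟫ = ⟪δ, fderiv ℝ (gradient A) φ δ⟫ := by
      have h1 : gradient (bregman A φstar) φ =
          (InnerProductSpace.toDual ℝ (EuclideanSpace ℝ (Fin d))).symm
            (fderiv ℝ (bregman A φstar) φ) := rfl
      rw [h1, InnerProductSpace.toDual_symm_apply,
        (one_point_PL_bounds_key_deriv A hA φstar φ).fderiv]
      simp only [ContinuousLinearMap.coe_comp', Function.comp_apply,
        ContinuousLinearMap.flip_apply, innerSL_apply_apply, ← hδ]
      exact real_inner_comm _ _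
    -- the Bregman divergence along the ray
    set F : ℝ → ℝ := fun s => bregman A φstar (φstar + s • δ) with hF
    have hF' : ∀ s : ℝ, HasDerivAt F
        (s * ⟪δ, fderiv ℝ (gradient A) (φstar + s • δ) δ⟫) s := by
      intro s
      have hray : HasDerivAt (fun s : ℝ => φstar + s • δ) δ s := by
        simpa using ((hasDerivAt_id s).smul_const δ).const_add φstar
      have h := (one_point_PL_bounds_key_deriv A hA φstar (φstar + s • δ)).comp_hasDerivAt s hray
      refine h.congr_deriv (Eq.symm ?_)
      simp only [ContinuousLinearMap.coe_comp', Function.comp_apply,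
        ContinuousLinearMap.flip_apply, innerSL_apply_apply, add_sub_cancel_left,
        inner_smul_right]
      rw [real_inner_comm]
    have hF0 : F 0 = 0 := by simp [hF, bregman]
    have hF1 : F 1 = bregman A φstar φ := by rw [hF]; simp only [hφ1]
    have hlow : α * ‖δ‖ ^ 2 / 2 ≤ bregman A φstar φ := by
      have := one_point_PL_bounds_quad_lower (c := α * ‖δ‖ ^ 2) hF' ?_
      · rw [hF0, hF1] at this; linarith
      · intro s hs
        have h := (hspec s hs δ).1
        have hs0 : 0 ≤ s := hs.1
        calc α * ‖δ‖ ^ 2 * s = s * (α * ‖δ‖ ^ 2) := by ring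
          _ ≤ s * ⟪δ, fderiv ℝ (gradient A) (φstar + s • δ) δ⟫ :=
              mul_le_mul_of_nonneg_left h hs0
    have hhigh : bregman A φstar φ ≤ β * ‖δ‖ ^ 2 / 2 := by
      have := one_point_PL_bounds_quad_upper (c := β * ‖δ‖ ^ 2) hF' ?_
      · rw [hF0, hF1] at this; linarith
      · intro s hs
        have h := (hspec s hs δ).2
        have hs0 : 0 ≤ s := hs.1
        calc s * ⟪δ, fderiv ℝ (gradient A) (φstar + s • δ) δ⟫
            ≤ s * (β * ‖δ‖ ^ 2) := mul_le_mul_of_nonneg_left h hs0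
          _ = β * ‖δ‖ ^ 2 * s := by ring
    rw [hgradL]
    obtain ⟨hI1, hI2⟩ := hIφ
    constructor
    · rw [div_mul_eq_mul_div, div_le_iff₀ hβ]
      nlinarith
    · rw [div_mul_eq_mul_div, le_div_iff₀ hα]
      nlinarith
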